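/- arXiv:2407.07679 — 2 statements merged into one kernel-verified Lean document; each statement's English description precedes it below -/
import Mathlib

section
/- For ℓ ≥ 3 and a ∈ ℤ/ℓℤ, set ^LỸ^{(a)} := I + X^{(a)}D^{(a)} (a matrix over D_ℓ). Then the following identities hold in D_ℓ: (i) (^LỸ^{(a)})_1 X^{(a−1)}_2 = X^{(a−1)}_2 R_{21} (^LỸ^{(a)})_1 R_{21}^{−1}; (ii) (^LỸ^{(a)})_1 X^{(b)}_2 = X^{(b)}_2 (^LỸ^{(a)})_1 for all b ≠ a, a−1; (iii) D^{(a−1)}_2 (^LỸ^{(a)})_1 = R_{21} (^LỸ^{(a)})_1 R_{21}^{−1} D^{(a−1)}_2; (iv) (^LỸ^{(a)})_1 D^{(b)}_2 = D^{(b)}_2 (^LỸ^{(a)})_1 for all b ≠ a, a−1. (These are the unlocalized forms of the relations (YL3)–(YL6) for ^LY^{(a)} = (^LỸ^{(a)})^{−1}.) -/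
noncomputable section
open scoped BigOperators

namespace Rmatrix

/-- The base field `ℂ(q)`. -/
abbrev K : Type := RatFunc ℂ

/-- The parameter `q`. -/
def qq : K := RatFunc.X

/-- Row/column index type for `M_n ⊗ M_n`. -/
abbrev Idx (n : ℕ) := Fin n × Fin n

/-- The `R`-matrix
`R = q Σᵢ Eᵢᵢ⊗Eᵢᵢ + Σ_{i≠j} Eᵢᵢ⊗Eⱼⱼ + (q−q⁻¹) Σ_{i>j} Eⱼᵢ⊗Eᵢⱼ`. -/
def Rm (n : ℕ) : Matrix (Idx n) (Idx n) K := fun p r =>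
  (if p.1 = r.1 ∧ p.2 = r.2 ∧ p.1 = p.2 then qq else 0) +
  (if p.1 = r.1 ∧ p.2 = r.2 ∧ p.1 ≠ p.2 then 1 else 0) +
  (if p.1 = r.2 ∧ p.2 = r.1 ∧ p.1 < p.2 then qq - qq⁻¹ else 0)

/-- `R₂₁`, the `R`-matrix with the two tensor factors swapped. -/
def Rm21 (n : ℕ) : Matrix (Idx n) (Idx n) K := fun p r => Rm n (p.2, p.1) (r.2, r.1)

variable (n : ℕ) (A : Type) [Ring A] [Algebra K A]

/-- A scalar matrix viewed as a matrix with entries in the `K`-algebra `A`. -/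
def ext (M : Matrix (Idx n) (Idx n) K) : Matrix (Idx n) (Idx n) A :=
  M.map (algebraMap K A)

/-- `M₁ = Σ E_ij ⊗ I ⊗ m_ij`, the matrix `M` placed in the first tensor factor. -/
def m1 (M : Matrix (Fin n) (Fin n) A) : Matrix (Idx n) (Idx n) A :=
  fun p r => if p.2 = r.2 then M p.1 r.1 else 0

/-- `M₂ = Σ I ⊗ E_ij ⊗ m_ij`, the matrix `M` placed in the second tensor factor. -/
def m2 (M : Matrix (Fin n) (Fin n) A) : Matrix (Idx n) (Idx n) A :=
  fun p r => if p.1 = r.1 then M p.2 r.2 else 0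

/-- `Ω = Σ_{ij} E_ij ⊗ E_ji ⊗ 1`. -/
def Om : Matrix (Idx n) (Idx n) A := fun p r => if p.1 = r.2 ∧ p.2 = r.1 then 1 else 0

end Rmatrix

namespace Dell

open Rmatrix

variable (ℓ n : ℕ)

/-- Generators `x_ij^{(a)}`, `∂_ij^{(a)}` of `D_ℓ`, for `a ∈ ℤ/ℓℤ`. -/
inductive Gen (ℓ n : ℕ) : Type
  | x : ZMod ℓ → Fin n → Fin n → Gen ℓ n
  | d : ZMod ℓ → Fin n → Fin n → Gen ℓ n

abbrev F (ℓ n : ℕ) := FreeAlgebra K (Gen ℓ n)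

/-- The matrix `X^{(a)}` of generators, over the free algebra. -/
def XF (a : ZMod ℓ) : Matrix (Fin n) (Fin n) (F ℓ n) :=
  fun i j => FreeAlgebra.ι K (Gen.x a i j)

/-- The matrix `D^{(a)}` of generators, over the free algebra. -/
def DF (a : ZMod ℓ) : Matrix (Fin n) (Fin n) (F ℓ n) :=
  fun i j => FreeAlgebra.ι K (Gen.d a i j)

/-- `R` over the free algebra. -/
def Rf : Matrix (Idx n) (Idx n) (F ℓ n) := ext n (F ℓ n) (Rm n)
/-- `R₂₁` over the free algebra. -/
def R21f : Matrix (Idx n) (Idx n) (F ℓ n) := ext n (F ℓ n) (Rm21 n)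
/-- `R⁻¹` over the free algebra. -/
def Rif : Matrix (Idx n) (Idx n) (F ℓ n) := ext n (F ℓ n) (Rm n)⁻¹
/-- `R₂₁⁻¹` over the free algebra. -/
def R21if : Matrix (Idx n) (Idx n) (F ℓ n) := ext n (F ℓ n) (Rm21 n)⁻¹
/-- `Ω` over the free algebra. -/
def Omf : Matrix (Idx n) (Idx n) (F ℓ n) := Om n (F ℓ n)

/-- `M₁` over the free algebra. -/
def o1 (M : Matrix (Fin n) (Fin n) (F ℓ n)) : Matrix (Idx n) (Idx n) (F ℓ n) :=
  m1 n (F ℓ n) M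
/-- `M₂` over the free algebra. -/
def o2 (M : Matrix (Fin n) (Fin n) (F ℓ n)) : Matrix (Idx n) (Idx n) (F ℓ n) :=
  m2 n (F ℓ n) M

/-- The defining relations of the algebra `D_ℓ` of quantum differential operators on the
framed cyclic quiver with `ℓ ≥ 3` vertices. -/
inductive Rel (ℓ n : ℕ) : F ℓ n → F ℓ n → Prop
  | xaa (a : ZMod ℓ) (p r : Idx n) :
      Rel ℓ n ((R21f ℓ n * o1 ℓ n (XF ℓ n a) * o2 ℓ n (XF ℓ n a)) p r)
              ((o2 ℓ n (XF ℓ n a) * o1 ℓ n (XF ℓ n a) * Rf ℓ n) p r)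
  | daa (a : ZMod ℓ) (p r : Idx n) :
      Rel ℓ n ((R21f ℓ n * o1 ℓ n (DF ℓ n a) * o2 ℓ n (DF ℓ n a)) p r)
              ((o2 ℓ n (DF ℓ n a) * o1 ℓ n (DF ℓ n a) * Rf ℓ n) p r)
  | dxa (a : ZMod ℓ) (p r : Idx n) :
      Rel ℓ n ((o2 ℓ n (DF ℓ n a) * Rif ℓ n * o1 ℓ n (XF ℓ n a)) p r)
              ((o1 ℓ n (XF ℓ n a) * Rf ℓ n * o2 ℓ n (DF ℓ n a) + (qq - qq⁻¹) • Omf ℓ n) p r)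
  | xxadj (a : ZMod ℓ) (p r : Idx n) :
      Rel ℓ n ((o1 ℓ n (XF ℓ n a) * o2 ℓ n (XF ℓ n (a - 1))) p r)
              ((o2 ℓ n (XF ℓ n (a - 1)) * R21f ℓ n * o1 ℓ n (XF ℓ n a)) p r)
  | xxcom (a b : ZMod ℓ) (h : b ≠ a ∧ b ≠ a + 1 ∧ b ≠ a - 1) (p r : Idx n) :
      Rel ℓ n ((o1 ℓ n (XF ℓ n a) * o2 ℓ n (XF ℓ n b)) p r)
              ((o2 ℓ n (XF ℓ n b) * o1 ℓ n (XF ℓ n a)) p r)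
  | ddadj (a : ZMod ℓ) (p r : Idx n) :
      Rel ℓ n ((o1 ℓ n (DF ℓ n a) * o2 ℓ n (DF ℓ n (a + 1))) p r)
              ((o2 ℓ n (DF ℓ n (a + 1)) * Rif ℓ n * o1 ℓ n (DF ℓ n a)) p r)
  | ddcom (a b : ZMod ℓ) (h : b ≠ a ∧ b ≠ a + 1 ∧ b ≠ a - 1) (p r : Idx n) :
      Rel ℓ n ((o1 ℓ n (DF ℓ n a) * o2 ℓ n (DF ℓ n b)) p r)
              ((o2 ℓ n (DF ℓ n b) * o1 ℓ n (DF ℓ n a)) p r)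
  | dxadj1 (a : ZMod ℓ) (p r : Idx n) :
      Rel ℓ n ((o1 ℓ n (DF ℓ n a) * o2 ℓ n (XF ℓ n (a + 1))) p r)
              ((Rf ℓ n * o2 ℓ n (XF ℓ n (a + 1)) * o1 ℓ n (DF ℓ n a)) p r)
  | dxadj2 (a : ZMod ℓ) (p r : Idx n) :
      Rel ℓ n ((o1 ℓ n (DF ℓ n a) * o2 ℓ n (XF ℓ n (a - 1))) p r)
              ((o2 ℓ n (XF ℓ n (a - 1)) * o1 ℓ n (DF ℓ n a) * R21if ℓ n) p r)
  | dxcom (a b : ZMod ℓ) (h : b ≠ a ∧ b ≠ a + 1 ∧ b ≠ a - 1) (p r : Idx n) :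
      Rel ℓ n ((o1 ℓ n (DF ℓ n a) * o2 ℓ n (XF ℓ n b)) p r)
              ((o2 ℓ n (XF ℓ n b) * o1 ℓ n (DF ℓ n a)) p r)

/-- The algebra `D_ℓ` of quantum differential operators on the framed cyclic quiver. -/
abbrev Dl (ℓ n : ℕ) := RingQuot (Rel ℓ n)

/-- The matrix `X^{(a)}` over `D_ℓ`. -/
def XM (a : ZMod ℓ) : Matrix (Fin n) (Fin n) (Dl ℓ n) :=
  fun i j => RingQuot.mkAlgHom K (Rel ℓ n) (XF ℓ n a i j)

/-- The matrix `D^{(a)}` over `D_ℓ`. -/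
def DM (a : ZMod ℓ) : Matrix (Fin n) (Fin n) (Dl ℓ n) :=
  fun i j => RingQuot.mkAlgHom K (Rel ℓ n) (DF ℓ n a i j)

/-- `R` over `D_ℓ`. -/
def Ra : Matrix (Idx n) (Idx n) (Dl ℓ n) := ext n (Dl ℓ n) (Rm n)
/-- `R₂₁` over `D_ℓ`. -/
def R21a : Matrix (Idx n) (Idx n) (Dl ℓ n) := ext n (Dl ℓ n) (Rm21 n)
/-- `R⁻¹` over `D_ℓ`. -/
def Ria : Matrix (Idx n) (Idx n) (Dl ℓ n) := ext n (Dl ℓ n) (Rm n)⁻¹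
/-- `R₂₁⁻¹` over `D_ℓ`. -/
def R21ia : Matrix (Idx n) (Idx n) (Dl ℓ n) := ext n (Dl ℓ n) (Rm21 n)⁻¹

/-- `M₁` over `D_ℓ`. -/
def q1 (M : Matrix (Fin n) (Fin n) (Dl ℓ n)) : Matrix (Idx n) (Idx n) (Dl ℓ n) :=
  m1 n (Dl ℓ n) M
/-- `M₂` over `D_ℓ`. -/
def q2 (M : Matrix (Fin n) (Fin n) (Dl ℓ n)) : Matrix (Idx n) (Idx n) (Dl ℓ n) :=
  m2 n (Dl ℓ n) M

/-- `X^∘ := X^{(1)} X^{(2)} ⋯ X^{(ℓ)}`. -/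
def Xcirc : Matrix (Fin n) (Fin n) (Dl ℓ n) :=
  ((List.range ℓ).map fun k => XM ℓ n ((k : ZMod ℓ) + 1)).prod

/-- `^LỸ^{(a)} := I + X^{(a)} D^{(a)}`. -/
def LY (a : ZMod ℓ) : Matrix (Fin n) (Fin n) (Dl ℓ n) := 1 + XM ℓ n a * DM ℓ n a

/-- `^RY^{(a)} := I + D^{(a)} X^{(a)}`. -/
def RYa (a : ZMod ℓ) : Matrix (Fin n) (Fin n) (Dl ℓ n) := 1 + DM ℓ n a * XM ℓ n a

end Dell

namespace Statement9

open Rmatrix Dell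

-- ## R-matrix inverse over K

def Dm (n : ℕ) : Matrix (Idx n) (Idx n) K :=
  Matrix.diagonal (fun p => if p.1 = p.2 then qq else 1)
def Dmi (n : ℕ) : Matrix (Idx n) (Idx n) K :=
  Matrix.diagonal (fun p => if p.1 = p.2 then qq⁻¹ else 1)
def Nm (n : ℕ) : Matrix (Idx n) (Idx n) K := fun p r =>
  if p.1 = r.2 ∧ p.2 = r.1 ∧ p.1 < p.2 then qq - qq⁻¹ else 0
def Rmi (n : ℕ) : Matrix (Idx n) (Idx n) K := Dmi n - Nm n

lemma qq_ne_zero : qq ≠ 0 := RatFunc.X_ne_zero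

lemma Rm_eq (n : ℕ) : Rm n = Dm n + Nm n := by
  funext p r
  simp only [Rm, Dm, Nm, Matrix.add_apply, Matrix.diagonal_apply, Prod.ext_iff]
  by_cases h1 : p.1 = r.1 <;> by_cases h2 : p.2 = r.2 <;> by_cases h3 : p.1 = p.2 <;>
    simp only [h1, h2, h3, true_and, false_and, and_true, and_false, if_true, if_false,
      ne_eq, not_true, not_false_iff, zero_add, add_zero] <;>
  first
  | (have hr : r.1 = r.2 := by rw [← h1, ← h2]; exact h3
     simp [hr])
  | (have hr : ¬ r.1 = r.2 := by rw [← h1, ← h2]; exact h3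
     simp [hr])
  | skip

lemma diag_mul_diag_one (n : ℕ) (f g : Idx n → K) (h : ∀ p, f p * g p = 1) :
    Matrix.diagonal f * Matrix.diagonal g = 1 := by
  rw [Matrix.diagonal_mul_diagonal]
  have : (fun i => f i * g i) = fun _ : Idx n => (1 : K) := funext h
  rw [this, Matrix.diagonal_one]

lemma Dm_mul_Dmi (n : ℕ) : Dm n * Dmi n = 1 := by
  apply diag_mul_diag_one
  intro p; by_cases h : p.1 = p.2 <;> simp [h, mul_inv_cancel₀ qq_ne_zero]

lemma Dmi_mul_Dm (n : ℕ) : Dmi n * Dm n = 1 := by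
  apply diag_mul_diag_one
  intro p; by_cases h : p.1 = p.2 <;> simp [h, inv_mul_cancel₀ qq_ne_zero]

lemma Dm_mul_Nm (n : ℕ) : Dm n * Nm n = Nm n := by
  funext p r
  rw [Dm, Matrix.diagonal_mul]
  show (if p.1 = p.2 then qq else 1) * Nm n p r = Nm n p r
  by_cases h : p.1 = r.2 ∧ p.2 = r.1 ∧ p.1 < p.2
  · rw [if_neg (ne_of_lt h.2.2), one_mul]
  · rw [Nm, if_neg h, mul_zero]

lemma Dmi_mul_Nm (n : ℕ) : Dmi n * Nm n = Nm n := by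
  funext p r
  rw [Dmi, Matrix.diagonal_mul]
  show (if p.1 = p.2 then qq⁻¹ else 1) * Nm n p r = Nm n p r
  by_cases h : p.1 = r.2 ∧ p.2 = r.1 ∧ p.1 < p.2
  · rw [if_neg (ne_of_lt h.2.2), one_mul]
  · rw [Nm, if_neg h, mul_zero]

lemma Nm_mul_Dm (n : ℕ) : Nm n * Dm n = Nm n := by
  funext p r
  rw [Dm, Matrix.mul_diagonal]
  show Nm n p r * (if r.1 = r.2 then qq else 1) = Nm n p r
  by_cases h : p.1 = r.2 ∧ p.2 = r.1 ∧ p.1 < p.2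
  · have hlt : r.2 < r.1 := by rw [← h.1, ← h.2.1]; exact h.2.2
    rw [if_neg (ne_of_gt hlt), mul_one]
  · rw [Nm, if_neg h, zero_mul]

lemma Nm_mul_Dmi (n : ℕ) : Nm n * Dmi n = Nm n := by
  funext p r
  rw [Dmi, Matrix.mul_diagonal]
  show Nm n p r * (if r.1 = r.2 then qq⁻¹ else 1) = Nm n p r
  by_cases h : p.1 = r.2 ∧ p.2 = r.1 ∧ p.1 < p.2
  · have hlt : r.2 < r.1 := by rw [← h.1, ← h.2.1]; exact h.2.2
    rw [if_neg (ne_of_gt hlt), mul_one]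
  · rw [Nm, if_neg h, zero_mul]

lemma Nm_mul_Nm (n : ℕ) : Nm n * Nm n = 0 := by
  funext p r
  rw [Matrix.mul_apply]
  rw [show (0 : Matrix (Idx n) (Idx n) K) p r = 0 from rfl]
  apply Finset.sum_eq_zero
  intro s _
  by_cases h : p.1 = s.2 ∧ p.2 = s.1 ∧ p.1 < p.2
  · by_cases h' : s.1 = r.2 ∧ s.2 = r.1 ∧ s.1 < s.2
    · exact absurd (h'.2.2) (by rw [← h.1, ← h.2.1]; exact not_lt.2 (le_of_lt h.2.2))
    · rw [Nm]; rw [show Nm n s r = 0 from if_neg h', mul_zero]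
  · rw [show Nm n p s = 0 from if_neg h, zero_mul]

lemma Rm_mul_Rmi (n : ℕ) : Rm n * Rmi n = 1 := by
  rw [Rm_eq, Rmi, add_mul, mul_sub, mul_sub, Dm_mul_Dmi, Dm_mul_Nm, Nm_mul_Dmi, Nm_mul_Nm]
  abel

lemma Rmi_mul_Rm (n : ℕ) : Rmi n * Rm n = 1 := by
  rw [Rm_eq, Rmi, sub_mul, mul_add, mul_add, Dmi_mul_Dm, Dmi_mul_Nm, Nm_mul_Dm, Nm_mul_Nm]
  abel

lemma Rm_inv_eq (n : ℕ) : (Rm n)⁻¹ = Rmi n :=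
  Matrix.inv_eq_right_inv (Rm_mul_Rmi n)

def τe (n : ℕ) : Idx n ≃ Idx n := Equiv.prodComm (Fin n) (Fin n)

def flipK (n : ℕ) (M : Matrix (Idx n) (Idx n) K) : Matrix (Idx n) (Idx n) K :=
  M.submatrix (τe n) (τe n)

lemma Rm21_eq (n : ℕ) : Rm21 n = flipK n (Rm n) := rfl

def Rm21i (n : ℕ) : Matrix (Idx n) (Idx n) K := flipK n (Rmi n)

lemma Rm21_mul_Rm21i (n : ℕ) : Rm21 n * Rm21i n = 1 := by
  rw [Rm21_eq, Rm21i, flipK, flipK, Matrix.submatrix_mul_equiv, Rm_mul_Rmi,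
    Matrix.submatrix_one_equiv]

lemma Rm21i_mul_Rm21 (n : ℕ) : Rm21i n * Rm21 n = 1 := by
  rw [Rm21_eq, Rm21i, flipK, flipK, Matrix.submatrix_mul_equiv, Rmi_mul_Rm,
    Matrix.submatrix_one_equiv]

lemma Rm21_inv_eq (n : ℕ) : (Rm21 n)⁻¹ = Rm21i n :=
  Matrix.inv_eq_right_inv (Rm21_mul_Rm21i n)

lemma flipK_flipK (n : ℕ) (M : Matrix (Idx n) (Idx n) K) : flipK n (flipK n M) = M := rfl

end Statement9

namespace Statement9

open Rmatrix Dell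

variable (ℓ n : ℕ)

-- ## `ext` is multiplicative

lemma ext_mul (A : Type) [Ring A] [Algebra K A] (M N : Matrix (Idx n) (Idx n) K) :
    Rmatrix.ext n A M * Rmatrix.ext n A N = Rmatrix.ext n A (M * N) := by
  unfold Rmatrix.ext
  rw [Matrix.map_mul]

lemma ext_one (A : Type) [Ring A] [Algebra K A] :
    Rmatrix.ext n A (1 : Matrix (Idx n) (Idx n) K) = 1 := by
  unfold Rmatrix.ext
  rw [Matrix.map_one _ (map_zero _) (map_one _)]

lemma Ra_mul_Ria : Ra ℓ n * Ria ℓ n = 1 := by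
  rw [Ra, Ria, Rm_inv_eq, ext_mul, Rm_mul_Rmi, ext_one]

lemma Ria_mul_Ra : Ria ℓ n * Ra ℓ n = 1 := by
  rw [Ra, Ria, Rm_inv_eq, ext_mul, Rmi_mul_Rm, ext_one]

lemma R21a_mul_R21ia : R21a ℓ n * R21ia ℓ n = 1 := by
  rw [R21a, R21ia, Rm21_inv_eq, ext_mul, Rm21_mul_Rm21i, ext_one]

lemma R21ia_mul_R21a : R21ia ℓ n * R21a ℓ n = 1 := by
  rw [R21a, R21ia, Rm21_inv_eq, ext_mul, Rm21i_mul_Rm21, ext_one]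

-- ## m1/m2 are ring homs

lemma m1_one (A : Type) [Ring A] [Algebra K A] :
    m1 n A (1 : Matrix (Fin n) (Fin n) A) = 1 := by
  funext p r
  simp only [m1, Matrix.one_apply, Prod.ext_iff]
  by_cases h1 : p.1 = r.1 <;> by_cases h2 : p.2 = r.2 <;> simp [h1, h2]

lemma m2_one (A : Type) [Ring A] [Algebra K A] :
    m2 n A (1 : Matrix (Fin n) (Fin n) A) = 1 := by
  funext p r
  simp only [m2, Matrix.one_apply, Prod.ext_iff]
  by_cases h1 : p.1 = r.1 <;> by_cases h2 : p.2 = r.2 <;> simp [h1, h2]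

lemma m1_add (A : Type) [Ring A] [Algebra K A] (M N : Matrix (Fin n) (Fin n) A) :
    m1 n A (M + N) = m1 n A M + m1 n A N := by
  funext p r
  simp only [m1, Matrix.add_apply]
  by_cases h : p.2 = r.2 <;> simp [h]

lemma m2_add (A : Type) [Ring A] [Algebra K A] (M N : Matrix (Fin n) (Fin n) A) :
    m2 n A (M + N) = m2 n A M + m2 n A N := by
  funext p r
  simp only [m2, Matrix.add_apply]
  by_cases h : p.1 = r.1 <;> simp [h]

lemma m1_mul (A : Type) [Ring A] [Algebra K A] (M N : Matrix (Fin n) (Fin n) A) :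
    m1 n A (M * N) = m1 n A M * m1 n A N := by
  funext p r
  simp only [m1, Matrix.mul_apply, Fintype.sum_prod_type]
  by_cases h : p.2 = r.2
  · simp [h, ite_mul, zero_mul, mul_ite, mul_zero, Finset.sum_ite_eq]
  · rw [if_neg h]
    symm
    apply Finset.sum_eq_zero; intro s1 _
    apply Finset.sum_eq_zero; intro s2 _
    by_cases h2 : p.2 = s2
    · have hn : ¬ s2 = r.2 := fun hh => h (h2.trans hh)
      rw [if_neg hn, mul_zero]
    · rw [if_neg h2, zero_mul]

lemma m2_mul (A : Type) [Ring A] [Algebra K A] (M N : Matrix (Fin n) (Fin n) A) :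
    m2 n A (M * N) = m2 n A M * m2 n A N := by
  funext p r
  simp only [m2, Matrix.mul_apply, Fintype.sum_prod_type]
  by_cases h : p.1 = r.1
  · simp [h, ite_mul, zero_mul, mul_ite, mul_zero, Finset.sum_ite_eq]
  · rw [if_neg h]
    symm
    apply Finset.sum_eq_zero; intro s1 _
    apply Finset.sum_eq_zero; intro s2 _
    by_cases h2 : p.1 = s1
    · have hn : ¬ s1 = r.1 := fun hh => h (h2.trans hh)
      rw [if_neg hn, mul_zero]
    · rw [if_neg h2, zero_mul]

lemma q1_one : q1 ℓ n (1 : Matrix (Fin n) (Fin n) (Dl ℓ n)) = 1 := m1_one n _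
lemma q1_add (M N) : q1 ℓ n (M + N) = q1 ℓ n M + q1 ℓ n N := m1_add n _ M N
lemma q1_mul (M N) : q1 ℓ n (M * N) = q1 ℓ n M * q1 ℓ n N := m1_mul n _ M N

lemma q1_LY (a : ZMod ℓ) :
    q1 ℓ n (LY ℓ n a) = 1 + q1 ℓ n (XM ℓ n a) * q1 ℓ n (DM ℓ n a) := by
  rw [LY, q1_add, q1_one, q1_mul]

end Statement9

namespace Statement9

open Rmatrix Dell

variable (ℓ n : ℕ)

-- ## transport of relations from the free algebra to `D_ℓ`

def φm : F ℓ n →ₐ[K] Dl ℓ n := RingQuot.mkAlgHom K (Rel ℓ n)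

def mp (M : Matrix (Idx n) (Idx n) (F ℓ n)) : Matrix (Idx n) (Idx n) (Dl ℓ n) :=
  M.map (φm ℓ n)

lemma mp_mul (M N : Matrix (Idx n) (Idx n) (F ℓ n)) :
    mp ℓ n (M * N) = mp ℓ n M * mp ℓ n N := by
  unfold mp
  have h := Matrix.map_mul (L := M) (M := N) (f := (φm ℓ n).toRingHom)
  simpa using h

lemma mp_o1 (a : ZMod ℓ) : mp ℓ n (o1 ℓ n (XF ℓ n a)) = q1 ℓ n (XM ℓ n a) := by
  funext p r
  simp only [mp, o1, m1, q1, Matrix.map_apply]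
  split
  · rfl
  · exact map_zero _

lemma mp_o1d (a : ZMod ℓ) : mp ℓ n (o1 ℓ n (DF ℓ n a)) = q1 ℓ n (DM ℓ n a) := by
  funext p r
  simp only [mp, o1, m1, q1, Matrix.map_apply]
  split
  · rfl
  · exact map_zero _

lemma mp_o2 (a : ZMod ℓ) : mp ℓ n (o2 ℓ n (XF ℓ n a)) = q2 ℓ n (XM ℓ n a) := by
  funext p r
  simp only [mp, o2, m2, q2, Matrix.map_apply]
  split
  · rfl
  · exact map_zero _

lemma mp_o2d (a : ZMod ℓ) : mp ℓ n (o2 ℓ n (DF ℓ n a)) = q2 ℓ n (DM ℓ n a) := by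
  funext p r
  simp only [mp, o2, m2, q2, Matrix.map_apply]
  split
  · rfl
  · exact map_zero _

lemma mp_ext (M : Matrix (Idx n) (Idx n) K) :
    mp ℓ n (Rmatrix.ext n (F ℓ n) M) = Rmatrix.ext n (Dl ℓ n) M := by
  funext p r
  simp only [mp, Rmatrix.ext, Matrix.map_apply]
  exact AlgHom.commutes _ _

lemma mp_Rf : mp ℓ n (Rf ℓ n) = Ra ℓ n := mp_ext ℓ n _
lemma mp_R21f : mp ℓ n (R21f ℓ n) = R21a ℓ n := mp_ext ℓ n _
lemma mp_Rif : mp ℓ n (Rif ℓ n) = Ria ℓ n := mp_ext ℓ n _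
lemma mp_R21if : mp ℓ n (R21if ℓ n) = R21ia ℓ n := mp_ext ℓ n _

lemma matrel {A B : Matrix (Idx n) (Idx n) (F ℓ n)}
    (h : ∀ p r, Rel ℓ n (A p r) (B p r)) : mp ℓ n A = mp ℓ n B := by
  funext p r
  exact RingQuot.mkAlgHom_rel K (h p r)

-- relations in matrix form over `D_ℓ`

lemma rel_xxadj (a : ZMod ℓ) :
    q1 ℓ n (XM ℓ n a) * q2 ℓ n (XM ℓ n (a - 1))
      = q2 ℓ n (XM ℓ n (a - 1)) * R21a ℓ n * q1 ℓ n (XM ℓ n a) := by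
  have h := matrel ℓ n (fun p r => Rel.xxadj a p r)
  simpa only [mp_mul, mp_o1, mp_o2, mp_R21f] using h

lemma rel_dxadj2 (a : ZMod ℓ) :
    q1 ℓ n (DM ℓ n a) * q2 ℓ n (XM ℓ n (a - 1))
      = q2 ℓ n (XM ℓ n (a - 1)) * q1 ℓ n (DM ℓ n a) * R21ia ℓ n := by
  have h := matrel ℓ n (fun p r => Rel.dxadj2 a p r)
  simpa only [mp_mul, mp_o1d, mp_o2, mp_R21if] using h

lemma rel_dxadj1 (a : ZMod ℓ) :
    q1 ℓ n (DM ℓ n a) * q2 ℓ n (XM ℓ n (a + 1))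
      = Ra ℓ n * q2 ℓ n (XM ℓ n (a + 1)) * q1 ℓ n (DM ℓ n a) := by
  have h := matrel ℓ n (fun p r => Rel.dxadj1 a p r)
  simpa only [mp_mul, mp_o1d, mp_o2, mp_Rf] using h

lemma rel_ddadj (a : ZMod ℓ) :
    q1 ℓ n (DM ℓ n a) * q2 ℓ n (DM ℓ n (a + 1))
      = q2 ℓ n (DM ℓ n (a + 1)) * Ria ℓ n * q1 ℓ n (DM ℓ n a) := by
  have h := matrel ℓ n (fun p r => Rel.ddadj a p r)
  simpa only [mp_mul, mp_o1d, mp_o2d, mp_Rif] using h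

lemma rel_xxcom (a b : ZMod ℓ) (h : b ≠ a ∧ b ≠ a + 1 ∧ b ≠ a - 1) :
    q1 ℓ n (XM ℓ n a) * q2 ℓ n (XM ℓ n b) = q2 ℓ n (XM ℓ n b) * q1 ℓ n (XM ℓ n a) := by
  have hh := matrel ℓ n (fun p r => Rel.xxcom a b h p r)
  simpa only [mp_mul, mp_o1, mp_o2] using hh

lemma rel_ddcom (a b : ZMod ℓ) (h : b ≠ a ∧ b ≠ a + 1 ∧ b ≠ a - 1) :
    q1 ℓ n (DM ℓ n a) * q2 ℓ n (DM ℓ n b) = q2 ℓ n (DM ℓ n b) * q1 ℓ n (DM ℓ n a) := by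
  have hh := matrel ℓ n (fun p r => Rel.ddcom a b h p r)
  simpa only [mp_mul, mp_o1d, mp_o2d] using hh

lemma rel_dxcom (a b : ZMod ℓ) (h : b ≠ a ∧ b ≠ a + 1 ∧ b ≠ a - 1) :
    q1 ℓ n (DM ℓ n a) * q2 ℓ n (XM ℓ n b) = q2 ℓ n (XM ℓ n b) * q1 ℓ n (DM ℓ n a) := by
  have hh := matrel ℓ n (fun p r => Rel.dxcom a b h p r)
  simpa only [mp_mul, mp_o1d, mp_o2] using hh

-- ## the flip on matrices over `D_ℓ`

def fD (M : Matrix (Idx n) (Idx n) (Dl ℓ n)) : Matrix (Idx n) (Idx n) (Dl ℓ n) :=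
  M.submatrix (τe n) (τe n)

lemma fD_mul (M N : Matrix (Idx n) (Idx n) (Dl ℓ n)) :
    fD ℓ n (M * N) = fD ℓ n M * fD ℓ n N :=
  (Matrix.submatrix_mul_equiv M N (τe n) (τe n) (τe n)).symm

lemma fD_q1 (M : Matrix (Fin n) (Fin n) (Dl ℓ n)) : fD ℓ n (q1 ℓ n M) = q2 ℓ n M := rfl
lemma fD_q2 (M : Matrix (Fin n) (Fin n) (Dl ℓ n)) : fD ℓ n (q2 ℓ n M) = q1 ℓ n M := rfl

lemma fD_ext (M : Matrix (Idx n) (Idx n) K) :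
    fD ℓ n (Rmatrix.ext n (Dl ℓ n) M) = Rmatrix.ext n (Dl ℓ n) (flipK n M) := rfl

lemma fD_Ra : fD ℓ n (Ra ℓ n) = R21a ℓ n := rfl
lemma fD_R21a : fD ℓ n (R21a ℓ n) = Ra ℓ n := rfl

lemma fD_Ria : fD ℓ n (Ria ℓ n) = R21ia ℓ n := by
  rw [Ria, Rm_inv_eq, fD_ext, R21ia, Rm21_inv_eq]
  rfl

lemma fD_R21ia : fD ℓ n (R21ia ℓ n) = Ria ℓ n := by
  rw [R21ia, Rm21_inv_eq, fD_ext, Ria, Rm_inv_eq]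
  rfl

-- flipped relations

lemma rel_C (a : ZMod ℓ) :
    q2 ℓ n (DM ℓ n (a - 1)) * q1 ℓ n (XM ℓ n a)
      = R21a ℓ n * q1 ℓ n (XM ℓ n a) * q2 ℓ n (DM ℓ n (a - 1)) := by
  have h := rel_dxadj1 ℓ n (a - 1)
  rw [show a - 1 + 1 = a by ring] at h
  have h2 := congrArg (fD ℓ n) h
  simpa only [fD_mul, fD_q1, fD_q2, fD_Ra] using h2

lemma rel_D (a : ZMod ℓ) :
    q2 ℓ n (DM ℓ n (a - 1)) * q1 ℓ n (DM ℓ n a)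
      = q1 ℓ n (DM ℓ n a) * R21ia ℓ n * q2 ℓ n (DM ℓ n (a - 1)) := by
  have h := rel_ddadj ℓ n (a - 1)
  rw [show a - 1 + 1 = a by ring] at h
  have h2 := congrArg (fD ℓ n) h
  simpa only [fD_mul, fD_q1, fD_q2, fD_Ria] using h2

lemma rel_E (a : ZMod ℓ) :
    q2 ℓ n (XM ℓ n (a + 1)) * q1 ℓ n (XM ℓ n a)
      = q1 ℓ n (XM ℓ n a) * Ra ℓ n * q2 ℓ n (XM ℓ n (a + 1)) := by
  have h := rel_xxadj ℓ n (a + 1)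
  rw [show a + 1 - 1 = a by ring] at h
  have h2 := congrArg (fD ℓ n) h
  simpa only [fD_mul, fD_q1, fD_q2, fD_R21a] using h2

lemma rel_G (a : ZMod ℓ) :
    q2 ℓ n (DM ℓ n (a + 1)) * q1 ℓ n (XM ℓ n a)
      = q1 ℓ n (XM ℓ n a) * q2 ℓ n (DM ℓ n (a + 1)) * Ria ℓ n := by
  have h := rel_dxadj2 ℓ n (a + 1)
  rw [show a + 1 - 1 = a by ring] at h
  have h2 := congrArg (fD ℓ n) h
  simpa only [fD_mul, fD_q1, fD_q2, fD_R21ia] using h2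

lemma rel_xdcom (a b : ZMod ℓ) (h : b ≠ a ∧ b ≠ a + 1 ∧ b ≠ a - 1) :
    q1 ℓ n (XM ℓ n a) * q2 ℓ n (DM ℓ n b) = q2 ℓ n (DM ℓ n b) * q1 ℓ n (XM ℓ n a) := by
  have h' : a ≠ b ∧ a ≠ b + 1 ∧ a ≠ b - 1 := by
    refine ⟨fun hh => h.1 hh.symm, fun hh => h.2.2 ?_, fun hh => h.2.1 ?_⟩
    · rw [hh]; ring
    · rw [hh]; ring
  have hh := rel_dxcom ℓ n b a h'
  have h2 := congrArg (fD ℓ n) hh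
  simpa only [fD_mul, fD_q1, fD_q2] using h2.symm

-- ## abstract ring computations

section Abstract
variable {S : Type*} [Ring S]

lemma key1 (X D Z R Ri : S) (hA : X * Z = Z * R * X) (hB : D * Z = Z * D * Ri)
    (hRR : R * Ri = 1) : (1 + X * D) * Z = Z * R * (1 + X * D) * Ri := by
  calc (1 + X * D) * Z = Z + X * (D * Z) := by noncomm_ring
    _ = Z + X * (Z * D * Ri) := by rw [hB]
    _ = Z + (X * Z) * (D * Ri) := by noncomm_ring
    _ = Z + (Z * R * X) * (D * Ri) := by rw [hA]
    _ = Z * (R * Ri) + (Z * R * X) * (D * Ri) := by rw [hRR, mul_one]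
    _ = Z * R * (1 + X * D) * Ri := by noncomm_ring

lemma key2 (X D W R : S) (hE : W * X = X * R * W) (hF : D * W = R * W * D) :
    (1 + X * D) * W = W * (1 + X * D) := by
  rw [add_mul, one_mul, mul_add, mul_one, mul_assoc, hF, ← mul_assoc, ← mul_assoc, ← hE,
    mul_assoc]

lemma key3 (X D W : S) (h1 : X * W = W * X) (h2 : D * W = W * D) :
    (1 + X * D) * W = W * (1 + X * D) := by
  rw [add_mul, one_mul, mul_add, mul_one, mul_assoc, h2, ← mul_assoc, h1, mul_assoc]

lemma key4 (X D D' R Ri : S) (hC : D' * X = R * X * D') (hD : D' * D = D * Ri * D')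
    (hRR : R * Ri = 1) : D' * (1 + X * D) = R * (1 + X * D) * Ri * D' := by
  calc D' * (1 + X * D) = D' + (D' * X) * D := by noncomm_ring
    _ = D' + (R * X * D') * D := by rw [hC]
    _ = D' + (R * X) * (D' * D) := by noncomm_ring
    _ = D' + (R * X) * (D * Ri * D') := by rw [hD]
    _ = (R * Ri) * D' + (R * X) * (D * Ri * D') := by rw [hRR, one_mul]
    _ = R * (1 + X * D) * Ri * D' := by noncomm_ring

lemma key5 (X D V Ri : S) (hG : V * X = X * V * Ri) (hH : D * V = V * Ri * D) :
    (1 + X * D) * V = V * (1 + X * D) := by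
  rw [add_mul, one_mul, mul_add, mul_one, mul_assoc, hH, ← mul_assoc, ← mul_assoc, ← hG,
    mul_assoc]

end Abstract

end Statement9

namespace Statement9

open Rmatrix Dell

/--
For `ℓ ≥ 3`, `a ∈ ℤ/ℓℤ` and `^LỸ^{(a)} = I + X^{(a)}D^{(a)}` in `D_ℓ`:
(i) `(^LỸ^{(a)})₁ X^{(a−1)}₂ = X^{(a−1)}₂ R₂₁ (^LỸ^{(a)})₁ R₂₁⁻¹`;
(ii) `(^LỸ^{(a)})₁ X^{(b)}₂ = X^{(b)}₂ (^LỸ^{(a)})₁` for all `b ≠ a, a−1`;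
(iii) `D^{(a−1)}₂ (^LỸ^{(a)})₁ = R₂₁ (^LỸ^{(a)})₁ R₂₁⁻¹ D^{(a−1)}₂`;
(iv) `(^LỸ^{(a)})₁ D^{(b)}₂ = D^{(b)}₂ (^LỸ^{(a)})₁` for all `b ≠ a, a−1`.
-/
theorem statement_9 (ℓ n : ℕ) (hl : 3 ≤ ℓ) (hn : 1 ≤ n) (a : ZMod ℓ) :
    (q1 ℓ n (LY ℓ n a) * q2 ℓ n (XM ℓ n (a - 1))
      = q2 ℓ n (XM ℓ n (a - 1)) * R21a ℓ n * q1 ℓ n (LY ℓ n a) * R21ia ℓ n) ∧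
    (∀ b : ZMod ℓ, b ≠ a → b ≠ a - 1 →
      q1 ℓ n (LY ℓ n a) * q2 ℓ n (XM ℓ n b) = q2 ℓ n (XM ℓ n b) * q1 ℓ n (LY ℓ n a)) ∧
    (q2 ℓ n (DM ℓ n (a - 1)) * q1 ℓ n (LY ℓ n a)
      = R21a ℓ n * q1 ℓ n (LY ℓ n a) * R21ia ℓ n * q2 ℓ n (DM ℓ n (a - 1))) ∧
    (∀ b : ZMod ℓ, b ≠ a → b ≠ a - 1 →
      q1 ℓ n (LY ℓ n a) * q2 ℓ n (DM ℓ n b) = q2 ℓ n (DM ℓ n b) * q1 ℓ n (LY ℓ n a)) := by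
  refine ⟨?_, ?_, ?_, ?_⟩
  · rw [q1_LY]
    exact key1 _ _ _ _ _ (rel_xxadj ℓ n a) (rel_dxadj2 ℓ n a) (R21a_mul_R21ia ℓ n)
  · intro b hb1 hb2
    rw [q1_LY]
    by_cases hb : b = a + 1
    · subst hb
      exact key2 _ _ _ _ (rel_E ℓ n a) (rel_dxadj1 ℓ n a)
    · exact key3 _ _ _ (rel_xxcom ℓ n a b ⟨hb1, hb, hb2⟩) (rel_dxcom ℓ n a b ⟨hb1, hb, hb2⟩)
  · rw [q1_LY]
    exact key4 _ _ _ _ _ (rel_C ℓ n a) (rel_D ℓ n a) (R21a_mul_R21ia ℓ n)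
  · intro b hb1 hb2
    rw [q1_LY]
    by_cases hb : b = a + 1
    · subst hb
      exact key5 _ _ _ _ (rel_G ℓ n a) (rel_ddadj ℓ n a)
    · exact key3 _ _ _ (rel_xdcom ℓ n a b ⟨hb1, hb, hb2⟩) (rel_ddcom ℓ n a b ⟨hb1, hb, hb2⟩)

end Statement9
end
end

section
/- For ℓ ≥ 3 and a ∈ ℤ/ℓℤ, set ^RY^{(a)} := I + D^{(a)}X^{(a)} (a matrix over D_ℓ). Then the following identities hold in D_ℓ: (i) R^{−1} (^RY^{(a)})_1 R X^{(a+1)}_2 = X^{(a+1)}_2 (^RY^{(a)})_1; (ii) (^RY^{(a)})_1 X^{(b)}_2 = X^{(b)}_2 (^RY^{(a)})_1 for all b ≠ a, a+1; (iii) (^RY^{(a)})_1 D^{(a+1)}_2 = D^{(a+1)}_2 R^{−1} (^RY^{(a)})_1 R; (iv) (^RY^{(a)})_1 D^{(b)}_2 = D^{(b)}_2 (^RY^{(a)})_1 for all b ≠ a, a+1. -/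
noncomputable section
open scoped BigOperators

namespace S10Aux

open Rmatrix Dell Matrix

/-- Diagonal part of `R`. -/
def Ad (n : ℕ) : Matrix (Idx n) (Idx n) K :=
  Matrix.diagonal (fun p => if p.1 = p.2 then qq else 1)

/-- Diagonal part of `R⁻¹`. -/
def Ad' (n : ℕ) : Matrix (Idx n) (Idx n) K :=
  Matrix.diagonal (fun p => if p.1 = p.2 then qq⁻¹ else 1)

/-- Off-diagonal nilpotent part of `R`. -/
def Bm (n : ℕ) : Matrix (Idx n) (Idx n) K := fun p r =>
  if p.1 = r.2 ∧ p.2 = r.1 ∧ p.1 < p.2 then qq - qq⁻¹ else 0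

/-- Explicit inverse of `R`. -/
def Sm (n : ℕ) : Matrix (Idx n) (Idx n) K := Ad' n - Bm n

lemma qq_ne_zero : qq ≠ 0 := RatFunc.X_ne_zero

lemma Rm_eq (n : ℕ) : Rm n = Ad n + Bm n := by
  funext p r
  simp only [Rm, Ad, Bm, Matrix.add_apply, Matrix.diagonal_apply]
  by_cases h1 : p.1 = r.1 <;> by_cases h2 : p.2 = r.2 <;> by_cases h3 : p.1 = p.2 <;>
    simp_all [Prod.ext_iff]

lemma Bm_mul_Bm (n : ℕ) : Bm n * Bm n = 0 := by
  funext p r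
  simp only [Matrix.mul_apply, Matrix.zero_apply]
  refine Finset.sum_eq_zero fun s _ => ?_
  by_cases h : p.1 = s.2 ∧ p.2 = s.1 ∧ p.1 < p.2
  · have : ¬ (s.1 = r.2 ∧ s.2 = r.1 ∧ s.1 < s.2) := by
      rintro ⟨_, _, hlt⟩
      rw [← h.1, ← h.2.1] at hlt
      exact absurd hlt (not_lt.2 h.2.2.le)
    simp [Bm, this]
  · simp [Bm, h]

lemma Ad_mul_Ad' (n : ℕ) : Ad n * Ad' n = 1 := by
  rw [Ad, Ad', Matrix.diagonal_mul_diagonal]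
  have : (fun p : Idx n => (if p.1 = p.2 then qq else 1) * (if p.1 = p.2 then qq⁻¹ else 1))
      = fun _ => 1 := by
    funext p; by_cases h : p.1 = p.2 <;> simp [h, mul_inv_cancel₀ qq_ne_zero]
  rw [this, Matrix.diagonal_one]

lemma Ad'_mul_Ad (n : ℕ) : Ad' n * Ad n = 1 := by
  rw [Ad, Ad', Matrix.diagonal_mul_diagonal]
  have : (fun p : Idx n => (if p.1 = p.2 then qq⁻¹ else 1) * (if p.1 = p.2 then qq else 1))
      = fun _ => 1 := by
    funext p; by_cases h : p.1 = p.2 <;> simp [h, inv_mul_cancel₀ qq_ne_zero]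
  rw [this, Matrix.diagonal_one]

lemma Ad_mul_Bm (n : ℕ) : Ad n * Bm n = Bm n := by
  funext p r
  rw [Ad, Matrix.diagonal_mul]
  by_cases h : p.1 = r.2 ∧ p.2 = r.1 ∧ p.1 < p.2
  · have hlt : r.2 < r.1 := by rw [← h.1, ← h.2.1]; exact h.2.2
    simp [Bm, h, h.2.2.ne, hlt, hlt.ne]
  · simp [Bm, h]

lemma Ad'_mul_Bm (n : ℕ) : Ad' n * Bm n = Bm n := by
  funext p r
  rw [Ad', Matrix.diagonal_mul]
  by_cases h : p.1 = r.2 ∧ p.2 = r.1 ∧ p.1 < p.2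
  · have hlt : r.2 < r.1 := by rw [← h.1, ← h.2.1]; exact h.2.2
    simp [Bm, h, h.2.2.ne, hlt, hlt.ne]
  · simp [Bm, h]

lemma Bm_mul_Ad (n : ℕ) : Bm n * Ad n = Bm n := by
  funext p r
  rw [Ad, Matrix.mul_diagonal]
  by_cases h : p.1 = r.2 ∧ p.2 = r.1 ∧ p.1 < p.2
  · have hlt : r.2 < r.1 := by rw [← h.1, ← h.2.1]; exact h.2.2
    simp [Bm, h, hlt.ne']
  · simp [Bm, h]

lemma Bm_mul_Ad' (n : ℕ) : Bm n * Ad' n = Bm n := by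
  funext p r
  rw [Ad', Matrix.mul_diagonal]
  by_cases h : p.1 = r.2 ∧ p.2 = r.1 ∧ p.1 < p.2
  · have hlt : r.2 < r.1 := by rw [← h.1, ← h.2.1]; exact h.2.2
    simp [Bm, h, hlt.ne']
  · simp [Bm, h]

lemma Rm_mul_Sm (n : ℕ) : Rm n * Sm n = 1 := by
  rw [Rm_eq, Sm, add_mul, mul_sub, mul_sub, Ad_mul_Ad', Ad_mul_Bm, Bm_mul_Ad', Bm_mul_Bm]
  rw [sub_zero]
  abel

lemma Sm_mul_Rm (n : ℕ) : Sm n * Rm n = 1 := by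
  rw [Rm_eq, Sm, sub_mul, mul_add, mul_add, Ad'_mul_Ad, Ad'_mul_Bm, Bm_mul_Ad, Bm_mul_Bm]
  rw [add_zero]
  abel

lemma Rm_inv (n : ℕ) : (Rm n)⁻¹ = Sm n := Matrix.inv_eq_right_inv (Rm_mul_Sm n)

lemma Rm21_eq (n : ℕ) : Rm21 n = (Rm n).submatrix Prod.swap Prod.swap := rfl

lemma Rm21_mul (n : ℕ) :
    Rm21 n * (Sm n).submatrix Prod.swap Prod.swap = 1 := by
  rw [Rm21_eq]
  have : (Prod.swap : Idx n → Idx n) = ⇑(Equiv.prodComm (Fin n) (Fin n)) := rfl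
  rw [this, Matrix.submatrix_mul_equiv, Rm_mul_Sm, Matrix.submatrix_one_equiv]

lemma Sm21_mul (n : ℕ) :
    (Sm n).submatrix Prod.swap Prod.swap * Rm21 n = 1 := by
  rw [Rm21_eq]
  have : (Prod.swap : Idx n → Idx n) = ⇑(Equiv.prodComm (Fin n) (Fin n)) := rfl
  rw [this, Matrix.submatrix_mul_equiv, Sm_mul_Rm, Matrix.submatrix_one_equiv]

lemma Rm21_inv (n : ℕ) : (Rm21 n)⁻¹ = (Sm n).submatrix Prod.swap Prod.swap :=
  Matrix.inv_eq_right_inv (Rm21_mul n)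
/-! ### Transfer from the free algebra to `D_ℓ` -/

variable (ℓ n : ℕ)

lemma ext_mul (A : Type) [Ring A] [Algebra K A] (M N : Matrix (Idx n) (Idx n) K) :
    ext n A (M * N) = ext n A M * ext n A N :=
  Matrix.map_mul

lemma ext_one (A : Type) [Ring A] [Algebra K A] :
    ext n A (1 : Matrix (Idx n) (Idx n) K) = 1 :=
  Matrix.map_one _ (map_zero _) (map_one _)

lemma Ria_mul_Ra : Ria ℓ n * Ra ℓ n = 1 := by
  rw [Ria, Ra, Rm_inv, ← ext_mul, Sm_mul_Rm, ext_one]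

lemma Ra_mul_Ria : Ra ℓ n * Ria ℓ n = 1 := by
  rw [Ria, Ra, Rm_inv, ← ext_mul, Rm_mul_Sm, ext_one]

lemma R21ia_mul_R21a : R21ia ℓ n * R21a ℓ n = 1 := by
  rw [R21ia, R21a, Rm21_inv, ← ext_mul, Sm21_mul, ext_one]

lemma R21a_mul_R21ia : R21a ℓ n * R21ia ℓ n = 1 := by
  rw [R21ia, R21a, Rm21_inv, ← ext_mul, Rm21_mul, ext_one]

lemma q1_one : q1 ℓ n 1 = 1 := by
  funext p r
  by_cases h2 : p.2 = r.2 <;> by_cases h1 : p.1 = r.1 <;>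
    simp [q1, m1, Matrix.one_apply, Prod.ext_iff, h1, h2]

lemma q1_add (M N : Matrix (Fin n) (Fin n) (Dl ℓ n)) :
    q1 ℓ n (M + N) = q1 ℓ n M + q1 ℓ n N := by
  funext p r
  by_cases h : p.2 = r.2 <;> simp [q1, m1, h]

lemma q1_mul (M N : Matrix (Fin n) (Fin n) (Dl ℓ n)) :
    q1 ℓ n (M * N) = q1 ℓ n M * q1 ℓ n N := by
  funext p r
  show (if p.2 = r.2 then (M * N) p.1 r.1 else 0)
      = ∑ s : Idx n, (if p.2 = s.2 then M p.1 s.1 else 0) * (if s.2 = r.2 then N s.1 r.1 else 0)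
  rw [Fintype.sum_prod_type_right]
  simp only [ite_mul, zero_mul, Finset.sum_ite_eq, Finset.mem_univ, if_true]
  by_cases h : p.2 = r.2
  · simp [h, Matrix.mul_apply, mul_ite, mul_zero]
  · simp [h]

lemma q1_RY (a : ZMod ℓ) :
    q1 ℓ n (RYa ℓ n a) = 1 + q1 ℓ n (DM ℓ n a) * q1 ℓ n (XM ℓ n a) := by
  rw [RYa, q1_add, q1_one, q1_mul]

/-- matrices over the free algebra mapped entrywise to `D_ℓ`. -/
def ΦM : Matrix (Idx n) (Idx n) (F ℓ n) →ₐ[K] Matrix (Idx n) (Idx n) (Dl ℓ n) :=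
  AlgHom.mapMatrix (RingQuot.mkAlgHom K (Rel ℓ n))

lemma Phi_o1X (a : ZMod ℓ) : ΦM ℓ n (o1 ℓ n (XF ℓ n a)) = q1 ℓ n (XM ℓ n a) := by
  funext p r
  show RingQuot.mkAlgHom K (Rel ℓ n) (if p.2 = r.2 then XF ℓ n a p.1 r.1 else 0)
      = (if p.2 = r.2 then XM ℓ n a p.1 r.1 else 0)
  by_cases h : p.2 = r.2 <;> simp [h, XM]

lemma Phi_o2X (a : ZMod ℓ) : ΦM ℓ n (o2 ℓ n (XF ℓ n a)) = q2 ℓ n (XM ℓ n a) := by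
  funext p r
  show RingQuot.mkAlgHom K (Rel ℓ n) (if p.1 = r.1 then XF ℓ n a p.2 r.2 else 0)
      = (if p.1 = r.1 then XM ℓ n a p.2 r.2 else 0)
  by_cases h : p.1 = r.1 <;> simp [h, XM]

lemma Phi_o1D (a : ZMod ℓ) : ΦM ℓ n (o1 ℓ n (DF ℓ n a)) = q1 ℓ n (DM ℓ n a) := by
  funext p r
  show RingQuot.mkAlgHom K (Rel ℓ n) (if p.2 = r.2 then DF ℓ n a p.1 r.1 else 0)
      = (if p.2 = r.2 then DM ℓ n a p.1 r.1 else 0)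
  by_cases h : p.2 = r.2 <;> simp [h, DM]

lemma Phi_o2D (a : ZMod ℓ) : ΦM ℓ n (o2 ℓ n (DF ℓ n a)) = q2 ℓ n (DM ℓ n a) := by
  funext p r
  show RingQuot.mkAlgHom K (Rel ℓ n) (if p.1 = r.1 then DF ℓ n a p.2 r.2 else 0)
      = (if p.1 = r.1 then DM ℓ n a p.2 r.2 else 0)
  by_cases h : p.1 = r.1 <;> simp [h, DM]

lemma Phi_ext (M : Matrix (Idx n) (Idx n) K) :
    ΦM ℓ n (ext n (F ℓ n) M) = ext n (Dl ℓ n) M := by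
  funext p r
  exact AlgHom.commutes _ _

lemma Phi_Rf : ΦM ℓ n (Rf ℓ n) = Ra ℓ n := Phi_ext ℓ n _
lemma Phi_Rif : ΦM ℓ n (Rif ℓ n) = Ria ℓ n := Phi_ext ℓ n _
lemma Phi_R21f : ΦM ℓ n (R21f ℓ n) = R21a ℓ n := Phi_ext ℓ n _
lemma Phi_R21if : ΦM ℓ n (R21if ℓ n) = R21ia ℓ n := Phi_ext ℓ n _
/-! ### Relations in `D_ℓ`, in matrix form -/

lemma hL1 (a : ZMod ℓ) :
    q1 ℓ n (XM ℓ n a) * q2 ℓ n (XM ℓ n (a - 1))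
      = q2 ℓ n (XM ℓ n (a - 1)) * R21a ℓ n * q1 ℓ n (XM ℓ n a) := by
  have h : ΦM ℓ n (o1 ℓ n (XF ℓ n a) * o2 ℓ n (XF ℓ n (a - 1)))
      = ΦM ℓ n (o2 ℓ n (XF ℓ n (a - 1)) * R21f ℓ n * o1 ℓ n (XF ℓ n a)) := by
    funext p r
    exact RingQuot.mkAlgHom_rel K (Rel.xxadj a p r)
  simpa only [_root_.map_mul, Phi_o1X, Phi_o2X, Phi_R21f] using h

lemma hL2 (a b : ZMod ℓ) (h1 : b ≠ a) (h2 : b ≠ a + 1) (h3 : b ≠ a - 1) :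
    q1 ℓ n (XM ℓ n a) * q2 ℓ n (XM ℓ n b)
      = q2 ℓ n (XM ℓ n b) * q1 ℓ n (XM ℓ n a) := by
  have h : ΦM ℓ n (o1 ℓ n (XF ℓ n a) * o2 ℓ n (XF ℓ n b))
      = ΦM ℓ n (o2 ℓ n (XF ℓ n b) * o1 ℓ n (XF ℓ n a)) := by
    funext p r
    exact RingQuot.mkAlgHom_rel K (Rel.xxcom a b ⟨h1, h2, h3⟩ p r)
  simpa only [_root_.map_mul, Phi_o1X, Phi_o2X] using h

lemma hL3 (a : ZMod ℓ) :
    q1 ℓ n (DM ℓ n a) * q2 ℓ n (DM ℓ n (a + 1))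
      = q2 ℓ n (DM ℓ n (a + 1)) * Ria ℓ n * q1 ℓ n (DM ℓ n a) := by
  have h : ΦM ℓ n (o1 ℓ n (DF ℓ n a) * o2 ℓ n (DF ℓ n (a + 1)))
      = ΦM ℓ n (o2 ℓ n (DF ℓ n (a + 1)) * Rif ℓ n * o1 ℓ n (DF ℓ n a)) := by
    funext p r
    exact RingQuot.mkAlgHom_rel K (Rel.ddadj a p r)
  simpa only [_root_.map_mul, Phi_o1D, Phi_o2D, Phi_Rif] using h

lemma hL4 (a b : ZMod ℓ) (h1 : b ≠ a) (h2 : b ≠ a + 1) (h3 : b ≠ a - 1) :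
    q1 ℓ n (DM ℓ n a) * q2 ℓ n (DM ℓ n b)
      = q2 ℓ n (DM ℓ n b) * q1 ℓ n (DM ℓ n a) := by
  have h : ΦM ℓ n (o1 ℓ n (DF ℓ n a) * o2 ℓ n (DF ℓ n b))
      = ΦM ℓ n (o2 ℓ n (DF ℓ n b) * o1 ℓ n (DF ℓ n a)) := by
    funext p r
    exact RingQuot.mkAlgHom_rel K (Rel.ddcom a b ⟨h1, h2, h3⟩ p r)
  simpa only [_root_.map_mul, Phi_o1D, Phi_o2D] using h

lemma hL5 (a : ZMod ℓ) :
    q1 ℓ n (DM ℓ n a) * q2 ℓ n (XM ℓ n (a + 1))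
      = Ra ℓ n * q2 ℓ n (XM ℓ n (a + 1)) * q1 ℓ n (DM ℓ n a) := by
  have h : ΦM ℓ n (o1 ℓ n (DF ℓ n a) * o2 ℓ n (XF ℓ n (a + 1)))
      = ΦM ℓ n (Rf ℓ n * o2 ℓ n (XF ℓ n (a + 1)) * o1 ℓ n (DF ℓ n a)) := by
    funext p r
    exact RingQuot.mkAlgHom_rel K (Rel.dxadj1 a p r)
  simpa only [_root_.map_mul, Phi_o1D, Phi_o2X, Phi_Rf] using h

lemma hL6 (a : ZMod ℓ) :
    q1 ℓ n (DM ℓ n a) * q2 ℓ n (XM ℓ n (a - 1))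
      = q2 ℓ n (XM ℓ n (a - 1)) * q1 ℓ n (DM ℓ n a) * R21ia ℓ n := by
  have h : ΦM ℓ n (o1 ℓ n (DF ℓ n a) * o2 ℓ n (XF ℓ n (a - 1)))
      = ΦM ℓ n (o2 ℓ n (XF ℓ n (a - 1)) * o1 ℓ n (DF ℓ n a) * R21if ℓ n) := by
    funext p r
    exact RingQuot.mkAlgHom_rel K (Rel.dxadj2 a p r)
  simpa only [_root_.map_mul, Phi_o1D, Phi_o2X, Phi_R21if] using h

lemma hL7 (a b : ZMod ℓ) (h1 : b ≠ a) (h2 : b ≠ a + 1) (h3 : b ≠ a - 1) :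
    q1 ℓ n (DM ℓ n a) * q2 ℓ n (XM ℓ n b)
      = q2 ℓ n (XM ℓ n b) * q1 ℓ n (DM ℓ n a) := by
  have h : ΦM ℓ n (o1 ℓ n (DF ℓ n a) * o2 ℓ n (XF ℓ n b))
      = ΦM ℓ n (o2 ℓ n (XF ℓ n b) * o1 ℓ n (DF ℓ n a)) := by
    funext p r
    exact RingQuot.mkAlgHom_rel K (Rel.dxcom a b ⟨h1, h2, h3⟩ p r)
  simpa only [_root_.map_mul, Phi_o1D, Phi_o2X] using h

/-! ### The flip -/

/-- Swapping the two tensor factors. -/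
def fl (M : Matrix (Idx n) (Idx n) (Dl ℓ n)) : Matrix (Idx n) (Idx n) (Dl ℓ n) :=
  M.submatrix Prod.swap Prod.swap

lemma fl_mul (M N : Matrix (Idx n) (Idx n) (Dl ℓ n)) :
    fl ℓ n (M * N) = fl ℓ n M * fl ℓ n N := by
  have h : (Prod.swap : Idx n → Idx n) = ⇑(Equiv.prodComm (Fin n) (Fin n)) := rfl
  rw [fl, fl, fl, h, Matrix.submatrix_mul_equiv]

lemma fl_q1 (M : Matrix (Fin n) (Fin n) (Dl ℓ n)) : fl ℓ n (q1 ℓ n M) = q2 ℓ n M := rfl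
lemma fl_q2 (M : Matrix (Fin n) (Fin n) (Dl ℓ n)) : fl ℓ n (q2 ℓ n M) = q1 ℓ n M := rfl
lemma fl_Ra : fl ℓ n (Ra ℓ n) = R21a ℓ n := rfl
lemma fl_R21a : fl ℓ n (R21a ℓ n) = Ra ℓ n := rfl

lemma fl_Ria : fl ℓ n (Ria ℓ n) = R21ia ℓ n := by
  funext p r
  show algebraMap K (Dl ℓ n) ((Rm n)⁻¹ (Prod.swap p) (Prod.swap r))
      = algebraMap K (Dl ℓ n) ((Rm21 n)⁻¹ p r)
  rw [Rm_inv, Rm21_inv]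
  rfl

lemma fl_R21ia : fl ℓ n (R21ia ℓ n) = Ria ℓ n := by
  funext p r
  show algebraMap K (Dl ℓ n) ((Rm21 n)⁻¹ (Prod.swap p) (Prod.swap r))
      = algebraMap K (Dl ℓ n) ((Rm n)⁻¹ p r)
  rw [Rm_inv, Rm21_inv]
  rfl

/-! ### Flipped relations -/

lemma hr1 (a : ZMod ℓ) :
    q2 ℓ n (XM ℓ n (a + 1)) * q1 ℓ n (XM ℓ n a)
      = q1 ℓ n (XM ℓ n a) * Ra ℓ n * q2 ℓ n (XM ℓ n (a + 1)) := by
  have h := congrArg (fl ℓ n) (hL1 ℓ n (a + 1))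
  rw [add_sub_cancel_right] at h
  simpa only [fl_mul, fl_q1, fl_q2, fl_R21a] using h

lemma hr8 (a : ZMod ℓ) :
    q2 ℓ n (DM ℓ n (a + 1)) * q1 ℓ n (XM ℓ n a)
      = q1 ℓ n (XM ℓ n a) * q2 ℓ n (DM ℓ n (a + 1)) * Ria ℓ n := by
  have h := congrArg (fl ℓ n) (hL6 ℓ n (a + 1))
  rw [add_sub_cancel_right] at h
  simpa only [fl_mul, fl_q1, fl_q2, fl_R21ia] using h

lemma hr9 (a : ZMod ℓ) :
    q2 ℓ n (DM ℓ n (a - 1)) * q1 ℓ n (DM ℓ n a)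
      = q1 ℓ n (DM ℓ n a) * R21ia ℓ n * q2 ℓ n (DM ℓ n (a - 1)) := by
  have h := congrArg (fl ℓ n) (hL3 ℓ n (a - 1))
  rw [sub_add_cancel] at h
  simpa only [fl_mul, fl_q1, fl_q2, fl_Ria] using h

lemma hr10 (a : ZMod ℓ) :
    q2 ℓ n (DM ℓ n (a - 1)) * q1 ℓ n (XM ℓ n a)
      = R21a ℓ n * q1 ℓ n (XM ℓ n a) * q2 ℓ n (DM ℓ n (a - 1)) := by
  have h := congrArg (fl ℓ n) (hL5 ℓ n (a - 1))
  rw [sub_add_cancel] at h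
  simpa only [fl_mul, fl_q1, fl_q2, fl_Ra] using h

lemma hr11 (a b : ZMod ℓ) (h1 : b ≠ a) (h2 : b ≠ a + 1) (h3 : b ≠ a - 1) :
    q2 ℓ n (DM ℓ n b) * q1 ℓ n (XM ℓ n a)
      = q1 ℓ n (XM ℓ n a) * q2 ℓ n (DM ℓ n b) := by
  have ha1 : a ≠ b := fun he => h1 he.symm
  have ha2 : a ≠ b + 1 := fun he => h3 (by rw [he, add_sub_cancel_right])
  have ha3 : a ≠ b - 1 := fun he => h2 (by rw [he, sub_add_cancel])
  have h := congrArg (fl ℓ n) (hL7 ℓ n b a ha1 ha2 ha3)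
  simpa only [fl_mul, fl_q1, fl_q2] using h
end S10Aux

namespace Statement10

open Rmatrix Dell

/--
For `ℓ ≥ 3`, `a ∈ ℤ/ℓℤ` and `^RY^{(a)} = I + D^{(a)}X^{(a)}` in `D_ℓ`:
(i) `R⁻¹ (^RY^{(a)})₁ R X^{(a+1)}₂ = X^{(a+1)}₂ (^RY^{(a)})₁`;
(ii) `(^RY^{(a)})₁ X^{(b)}₂ = X^{(b)}₂ (^RY^{(a)})₁` for all `b ≠ a, a+1`;
(iii) `(^RY^{(a)})₁ D^{(a+1)}₂ = D^{(a+1)}₂ R⁻¹ (^RY^{(a)})₁ R`;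
(iv) `(^RY^{(a)})₁ D^{(b)}₂ = D^{(b)}₂ (^RY^{(a)})₁` for all `b ≠ a, a+1`.
-/
theorem statement_10 (ℓ n : ℕ) (hl : 3 ≤ ℓ) (hn : 1 ≤ n) (a : ZMod ℓ) :
    (Ria ℓ n * q1 ℓ n (RYa ℓ n a) * Ra ℓ n * q2 ℓ n (XM ℓ n (a + 1))
      = q2 ℓ n (XM ℓ n (a + 1)) * q1 ℓ n (RYa ℓ n a)) ∧
    (∀ b : ZMod ℓ, b ≠ a → b ≠ a + 1 →
      q1 ℓ n (RYa ℓ n a) * q2 ℓ n (XM ℓ n b) = q2 ℓ n (XM ℓ n b) * q1 ℓ n (RYa ℓ n a)) ∧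
    (q1 ℓ n (RYa ℓ n a) * q2 ℓ n (DM ℓ n (a + 1))
      = q2 ℓ n (DM ℓ n (a + 1)) * Ria ℓ n * q1 ℓ n (RYa ℓ n a) * Ra ℓ n) ∧
    (∀ b : ZMod ℓ, b ≠ a → b ≠ a + 1 →
      q1 ℓ n (RYa ℓ n a) * q2 ℓ n (DM ℓ n b) = q2 ℓ n (DM ℓ n b) * q1 ℓ n (RYa ℓ n a)) := by
  have hY := S10Aux.q1_RY ℓ n a
  have hRiR := S10Aux.Ria_mul_Ra ℓ n
  have hR21iR21 := S10Aux.R21ia_mul_R21a ℓ n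
  refine ⟨?_, ?_, ?_, ?_⟩
  · -- (i)
    have e1 := S10Aux.hr1 ℓ n a
    have e2 := S10Aux.hL5 ℓ n a
    rw [hY]
    set R := Ra ℓ n
    set Ri := Ria ℓ n
    set X1 := q1 ℓ n (XM ℓ n a)
    set X2 := q2 ℓ n (XM ℓ n (a + 1))
    set D1 := q1 ℓ n (DM ℓ n a)
    calc Ri * (1 + D1 * X1) * R * X2
        = Ri * R * X2 + Ri * D1 * (X1 * R * X2) := by noncomm_ring
      _ = Ri * R * X2 + Ri * D1 * (X2 * X1) := by rw [← e1]
      _ = Ri * R * X2 + Ri * (D1 * X2) * X1 := by noncomm_ring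
      _ = Ri * R * X2 + Ri * (R * X2 * D1) * X1 := by rw [e2]
      _ = (Ri * R) * X2 + (Ri * R) * (X2 * (D1 * X1)) := by noncomm_ring
      _ = X2 * (1 + D1 * X1) := by rw [hRiR]; noncomm_ring
  · -- (ii)
    intro b hb1 hb2
    rw [hY]
    by_cases hb3 : b = a - 1
    · subst hb3
      have e3 := S10Aux.hL1 ℓ n a
      have e4 := S10Aux.hL6 ℓ n a
      set R21 := R21a ℓ n
      set R21i := R21ia ℓ n
      set X1 := q1 ℓ n (XM ℓ n a)
      set X2m := q2 ℓ n (XM ℓ n (a - 1))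
      set D1 := q1 ℓ n (DM ℓ n a)
      calc (1 + D1 * X1) * X2m
          = X2m + D1 * (X1 * X2m) := by noncomm_ring
        _ = X2m + D1 * (X2m * R21 * X1) := by rw [e3]
        _ = X2m + (D1 * X2m) * (R21 * X1) := by noncomm_ring
        _ = X2m + (X2m * D1 * R21i) * (R21 * X1) := by rw [e4]
        _ = X2m + X2m * D1 * (R21i * R21) * X1 := by noncomm_ring
        _ = X2m * (1 + D1 * X1) := by rw [hR21iR21]; noncomm_ring
    · have e5 := S10Aux.hL2 ℓ n a b hb1 hb2 hb3
      have e6 := S10Aux.hL7 ℓ n a b hb1 hb2 hb3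
      set X1 := q1 ℓ n (XM ℓ n a)
      set X2b := q2 ℓ n (XM ℓ n b)
      set D1 := q1 ℓ n (DM ℓ n a)
      calc (1 + D1 * X1) * X2b
          = X2b + D1 * (X1 * X2b) := by noncomm_ring
        _ = X2b + D1 * (X2b * X1) := by rw [e5]
        _ = X2b + (D1 * X2b) * X1 := by noncomm_ring
        _ = X2b + (X2b * D1) * X1 := by rw [e6]
        _ = X2b * (1 + D1 * X1) := by noncomm_ring
  · -- (iii)
    have e7 := S10Aux.hL3 ℓ n a
    have e8 := S10Aux.hr8 ℓ n a
    rw [hY]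
    set R := Ra ℓ n
    set Ri := Ria ℓ n
    set X1 := q1 ℓ n (XM ℓ n a)
    set D2 := q2 ℓ n (DM ℓ n (a + 1))
    set D1 := q1 ℓ n (DM ℓ n a)
    have e8' : D2 * X1 * R = X1 * D2 := by
      rw [e8, mul_assoc, hRiR, mul_one]
    calc (1 + D1 * X1) * D2
        = D2 + D1 * (X1 * D2) := by noncomm_ring
      _ = D2 + D1 * (D2 * X1 * R) := by rw [e8']
      _ = D2 + (D1 * D2) * (X1 * R) := by noncomm_ring
      _ = D2 + (D2 * Ri * D1) * (X1 * R) := by rw [e7]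
      _ = D2 * 1 + D2 * Ri * (D1 * X1) * R := by noncomm_ring
      _ = D2 * (Ri * R) + D2 * Ri * (D1 * X1) * R := by rw [hRiR]
      _ = D2 * Ri * (1 + D1 * X1) * R := by
            have expand : D2 * Ri * (1 + D1 * X1) * R
                = D2 * (Ri * R) + D2 * Ri * (D1 * X1) * R := by noncomm_ring
            rw [expand]
  · -- (iv)
    intro b hb1 hb2
    rw [hY]
    by_cases hb3 : b = a - 1
    · subst hb3
      have e9 := S10Aux.hr9 ℓ n a
      have e10 := S10Aux.hr10 ℓ n a
      set R21 := R21a ℓ n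
      set R21i := R21ia ℓ n
      set X1 := q1 ℓ n (XM ℓ n a)
      set D2m := q2 ℓ n (DM ℓ n (a - 1))
      set D1 := q1 ℓ n (DM ℓ n a)
      have e10' : R21i * (D2m * X1) = X1 * D2m := by
        rw [e10, ← mul_assoc, ← mul_assoc, hR21iR21, one_mul]
      calc (1 + D1 * X1) * D2m
          = D2m + D1 * (X1 * D2m) := by noncomm_ring
        _ = D2m + D1 * (R21i * (D2m * X1)) := by rw [e10']
        _ = D2m + (D1 * R21i * D2m) * X1 := by noncomm_ring
        _ = D2m + (D2m * D1) * X1 := by rw [← e9]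
        _ = D2m * (1 + D1 * X1) := by noncomm_ring
    · have e11 := S10Aux.hL4 ℓ n a b hb1 hb2 hb3
      have e12 := S10Aux.hr11 ℓ n a b hb1 hb2 hb3
      set X1 := q1 ℓ n (XM ℓ n a)
      set D2b := q2 ℓ n (DM ℓ n b)
      set D1 := q1 ℓ n (DM ℓ n a)
      calc (1 + D1 * X1) * D2b
          = D2b + D1 * (X1 * D2b) := by noncomm_ring
        _ = D2b + D1 * (D2b * X1) := by rw [← e12]
        _ = D2b + (D1 * D2b) * X1 := by noncomm_ring
        _ = D2b + (D2b * D1) * X1 := by rw [e11]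
        _ = D2b * (1 + D1 * X1) := by noncomm_ring

end Statement10
end
end
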